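/- Let α be a composition of n. The operators π_i^{RS*} on SIT(α) ∪ {0} satisfy the 0-Hecke algebra relations: (π_i^{RS*})∘(π_i^{RS*}) = π_i^{RS*} for all 1 ≤ i ≤ n−1; π_i^{RS*}∘π_j^{RS*} = π_j^{RS*}∘π_i^{RS*} whenever |i−j| ≥ 2; and π_i^{RS*}∘π_{i+1}^{RS*}∘π_i^{RS*} = π_{i+1}^{RS*}∘π_i^{RS*}∘π_{i+1}^{RS*} for all 1 ≤ i ≤ n−2. -/

import Mathlib

open Classical

namespace ImmHecke

/-- A filling assigns a natural-number entry to each cell `(row, column)` (0-indexed);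
row `0` is the bottom row.  Cells outside the diagram carry the junk value `0`. -/
abbrev Filling : Type := ℕ × ℕ → ℕ

/-- `c` is a cell of the diagram of the composition `α` (0-indexed rows and columns;
row `i` has `α_i` cells). -/
def IsCell (α : List ℕ) (c : ℕ × ℕ) : Prop :=
  c.1 < α.length ∧ c.2 < α.getD c.1 0

/-- `α` is a composition of `n`: a list of positive integers summing to `n`. -/
def IsComposition (α : List ℕ) (n : ℕ) : Prop :=
  (∀ a ∈ α, 0 < a) ∧ α.sum = n

/-- `T` is a bijective filling of the diagram of `α` with the entries `1, …, n`
(where `n = α.sum`), and with value `0` off the diagram. -/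
def IsStdFilling (α : List ℕ) (T : Filling) : Prop :=
  (∀ c, ¬ IsCell α c → T c = 0) ∧
  (∀ c, IsCell α c → 1 ≤ T c ∧ T c ≤ α.sum) ∧
  (∀ c c', IsCell α c → IsCell α c' → T c = T c' → c = c') ∧
  (∀ m, 1 ≤ m → m ≤ α.sum → ∃ c, IsCell α c ∧ T c = m)

/-- A standard immaculate tableau of shape `α`: a bijective standard filling whose
first-column entries strictly increase bottom to top and whose rows strictly
increase left to right. -/
def IsSIT (α : List ℕ) (T : Filling) : Prop :=
  IsStdFilling α T ∧
  (∀ i i' : ℕ, IsCell α (i, 0) → IsCell α (i', 0) → i < i' → T (i, 0) < T (i', 0)) ∧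
  (∀ i j j' : ℕ, IsCell α (i, j) → IsCell α (i, j') → j < j' → T (i, j) < T (i, j'))

/-- A standard extended tableau of shape `α`: a bijective standard filling whose rows
strictly increase left to right and all of whose columns strictly increase
bottom to top.  Note `SET(α) ⊆ SIT(α)`. -/
def IsSET (α : List ℕ) (T : Filling) : Prop :=
  IsStdFilling α T ∧
  (∀ i j j' : ℕ, IsCell α (i, j) → IsCell α (i, j') → j < j' → T (i, j) < T (i, j')) ∧
  (∀ i i' j : ℕ, IsCell α (i, j) → IsCell α (i', j) → i < i' → T (i, j) < T (i', j))

/-- `SIT*(α)`: standard immaculate tableaux whose first column contains exactly the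
entries `1, 2, …, ℓ(α)`. -/
def IsSITstar (α : List ℕ) (T : Filling) : Prop :=
  IsSIT α T ∧
  (∀ i, IsCell α (i, 0) → 1 ≤ T (i, 0) ∧ T (i, 0) ≤ α.length) ∧
  (∀ m, 1 ≤ m → m ≤ α.length → ∃ i, IsCell α (i, 0) ∧ T (i, 0) = m)

/-- In `T`, the entry `m+1` lies in a row strictly above the row of `m`. -/
def SuccAbove (α : List ℕ) (T : Filling) (m : ℕ) : Prop :=
  ∃ c c', IsCell α c ∧ IsCell α c' ∧ T c = m ∧ T c' = m + 1 ∧ c.1 < c'.1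

/-- In `T`, the entries `m` and `m+1` lie in the same row. -/
def SuccSameRow (α : List ℕ) (T : Filling) (m : ℕ) : Prop :=
  ∃ c c', IsCell α c ∧ IsCell α c' ∧ T c = m ∧ T c' = m + 1 ∧ c.1 = c'.1

/-- In `T`, the entry `m+1` lies in a row strictly below the row of `m`. -/
def SuccBelow (α : List ℕ) (T : Filling) (m : ℕ) : Prop :=
  ∃ c c', IsCell α c ∧ IsCell α c' ∧ T c = m ∧ T c' = m + 1 ∧ c'.1 < c.1

/-- In `T`, the entries `m` and `m+1` are both in the first column. -/
def BothFirstColumn (α : List ℕ) (T : Filling) (m : ℕ) : Prop :=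
  ∃ c c', IsCell α c ∧ IsCell α c' ∧ T c = m ∧ T c' = m + 1 ∧ c.2 = 0 ∧ c'.2 = 0

/-- `s_i(T)`: exchange the entries `i` and `i+1` of `T`. -/
def swapEntries (i : ℕ) (T : Filling) : Filling :=
  fun c => if T c = i then i + 1 else if T c = i + 1 then i else T c

/-- The row-strict dual immaculate 0-Hecke operator `π_i^{RS*}` on `SIT(α) ∪ {0}`
(`0` is encoded as `none`): `π_i(T) = T` if `i+1` is strictly above `i`;
`π_i(T) = 0` if `i` and `i+1` are in the same row; `π_i(T) = s_i(T)` if `i+1` is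
strictly below `i`. -/
noncomputable def piRS (α : List ℕ) (i : ℕ) : Option Filling → Option Filling
  | none => none
  | some T =>
    if SuccAbove α T i then some T
    else if SuccSameRow α T i then none
    else some (swapEntries i T)

/-- The dual immaculate 0-Hecke operator `π_i^{S*}` on `SIT(α) ∪ {0}`:
`π_i(T) = T` if `i+1` is in a row weakly below `i`; `π_i(T) = 0` if `i` and `i+1`
are both in the first column; `π_i(T) = s_i(T)` if `i+1` is strictly above `i`
and `i, i+1` are not both in the first column. -/
noncomputable def piS (α : List ℕ) (i : ℕ) : Option Filling → Option Filling
  | none => none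
  | some T =>
    if SuccSameRow α T i ∨ SuccBelow α T i then some T
    else if BothFirstColumn α T i then none
    else some (swapEntries i T)

/-- The 0-Hecke operator `π_i^{A*}` on `SIT(α)`: `π_i(T) = T` if `i+1` is strictly
above `i` or in the same row as `i`; `π_i(T) = s_i(T)` if `i+1` is strictly below `i`. -/
noncomputable def piA (α : List ℕ) (i : ℕ) (T : Filling) : Filling :=
  if SuccBelow α T i then swapEntries i T else T

/-- The 0-Hecke operator `π_i^{Ā*}` on `SIT(α) ∪ {0}`: `π_i(T) = T` if `i+1` is
strictly below `i`; `π_i(T) = 0` if `i` and `i+1` are in the same row or both in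
the first column; `π_i(T) = s_i(T)` if `i+1` is strictly above `i` and `i, i+1`
are not both in the first column. -/
noncomputable def piAbar (α : List ℕ) (i : ℕ) : Option Filling → Option Filling
  | none => none
  | some T =>
    if SuccBelow α T i then some T
    else if SuccSameRow α T i ∨ BothFirstColumn α T i then none
    else some (swapEntries i T)

/-- `x` belongs to `SIT(α) ∪ {0}` (with `0 = none`). -/
def InSITZ (α : List ℕ) (x : Option Filling) : Prop :=
  ∀ T, x = some T → IsSIT α T

/-- Successively apply the operators `π_{i_1}^{RS*}, …, π_{i_r}^{RS*}` (the list `l = [i_1, …, i_r]`). -/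
noncomputable def applySeqRS (α : List ℕ) (l : List ℕ) (x : Option Filling) : Option Filling :=
  l.foldl (fun y i => piRS α i y) x

/-- Successively apply the operators `π_{i_1}^{S*}, …, π_{i_r}^{S*}`. -/
noncomputable def applySeqS (α : List ℕ) (l : List ℕ) (x : Option Filling) : Option Filling :=
  l.foldl (fun y i => piS α i y) x

/-- The relation `T₁ ≼ T₂` on `SIT(α)`: some sequence of operators `π_i^{RS*}`
(indices in `{1, …, n-1}`, possibly empty) sends `T₁` to `T₂`. -/
def preRS (α : List ℕ) (T₁ T₂ : Filling) : Prop :=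
  ∃ l : List ℕ, (∀ i ∈ l, 1 ≤ i ∧ i ≤ α.sum - 1) ∧ applySeqRS α l (some T₁) = some T₂

/-- The one-line notation of `σ(T)`: read the entries of `T` from right to left in
each row, rows from top to bottom. -/
def readingWord (α : List ℕ) (T : Filling) : List ℕ :=
  ((List.range α.length).reverse).flatMap
    (fun i => ((List.range (α.getD i 0)).map fun j => T (i, j)).reverse)

/-- The number of inversions of a word `w`: pairs of positions `p < q` with `w p > w q`. -/
def inversions (w : List ℕ) : ℕ :=
  ((Finset.range w.length ×ˢ Finset.range w.length).filter
    (fun pq : ℕ × ℕ => pq.1 < pq.2 ∧ w.getD pq.2 0 < w.getD pq.1 0)).card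

/-- `S⁰_α`: first column contains `1, …, ℓ` bottom to top; the remaining cells are
filled with `ℓ+1, …, n` consecutively, reading rows from top to bottom and left to
right within each row. -/
noncomputable def S0 (α : List ℕ) : Filling := fun c =>
  if IsCell α c then
    if c.2 = 0 then c.1 + 1
    else
      α.length + (((List.range α.length).filter fun r => c.1 < r).map fun r => α.getD r 0 - 1).sum + c.2
  else 0

/-- `S^{row}_α`: the row superstandard tableau, entries `1, …, n` placed consecutively
reading rows bottom to top, left to right within each row. -/
noncomputable def Srow (α : List ℕ) : Filling := fun c =>
  if IsCell α c then (α.take c.1).sum + c.2 + 1 else 0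

/-- `S^{row*}_α`: first column contains `1, …, ℓ` bottom to top; the remaining cells
are filled with `ℓ+1, …, n` consecutively, reading rows bottom to top, left to right
within each row. -/
noncomputable def SrowStar (α : List ℕ) : Filling := fun c =>
  if IsCell α c then
    if c.2 = 0 then c.1 + 1
    else α.length + ((List.range c.1).map fun r => α.getD r 0 - 1).sum + c.2
  else 0

/-- `S^{col}_α`: the column superstandard tableau, entries `1, …, n` placed
consecutively reading columns bottom to top, columns left to right. -/
noncomputable def Scol (α : List ℕ) : Filling := fun c =>
  if IsCell α c then
    ((List.range c.2).map fun j' =>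
        ((List.range α.length).filter fun r => j' < α.getD r 0).length).sum
      + ((List.range c.1).filter fun r => c.2 < α.getD r 0).length + 1
  else 0

/-- The image of a basis element of `V_α` under the linearly extended operator
`π_i^{RS*}` (the value `0` of the operator is interpreted as the zero vector). -/
noncomputable def piTargetRS (α : List ℕ) (i : ℕ) (T : {T : Filling // IsSIT α T}) :
    ({T : Filling // IsSIT α T} →₀ ℚ) :=
  match piRS α i (some T.val) with
  | none => 0
  | some T' => if h : IsSIT α T' then Finsupp.single ⟨T', h⟩ 1 else 0

/-- The operator `π_i^{RS*}` extended to a `ℚ`-linear endomorphism of the free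
`ℚ`-vector space `V_α` with basis `SIT(α)`. -/
noncomputable def piRSLin (α : List ℕ) (i : ℕ) :
    ({T : Filling // IsSIT α T} →₀ ℚ) →ₗ[ℚ] ({T : Filling // IsSIT α T} →₀ ℚ) :=
  Finsupp.lsum ℚ fun T => LinearMap.toSpanSingleton ℚ _ (piTargetRS α i T)

/-- The image of a basis element of `Z_α` under the linearly extended operator
`π_i^{RS*}`. -/
noncomputable def piTargetSET (α : List ℕ) (i : ℕ) (T : {T : Filling // IsSET α T}) :
    ({T : Filling // IsSET α T} →₀ ℚ) :=
  match piRS α i (some T.val) with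
  | none => 0
  | some T' => if h : IsSET α T' then Finsupp.single ⟨T', h⟩ 1 else 0

/-- The operator `π_i^{RS*}` extended to a `ℚ`-linear endomorphism of the free
`ℚ`-vector space `Z_α` with basis `SET(α)`. -/
noncomputable def piRSLinSET (α : List ℕ) (i : ℕ) :
    ({T : Filling // IsSET α T} →₀ ℚ) →ₗ[ℚ] ({T : Filling // IsSET α T} →₀ ℚ) :=
  Finsupp.lsum ℚ fun T => LinearMap.toSpanSingleton ℚ _ (piTargetSET α i T)

/-! ### Auxiliary lemmas -/

/-- Injectivity of a filling on the cells of the diagram. -/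
def Inj (α : List ℕ) (T : Filling) : Prop :=
  ∀ c c', IsCell α c → IsCell α c' → T c = T c' → c = c'

lemma swapEntries_eq_swap (i : ℕ) (T : Filling) (c : ℕ × ℕ) :
    swapEntries i T c = Equiv.swap i (i + 1) (T c) := by
  simp [swapEntries, Equiv.swap_apply_def]

lemma inj_swap {α : List ℕ} {T : Filling} (hinj : Inj α T) (m : ℕ) :
    Inj α (swapEntries m T) := by
  intro c c' hc hc' h
  rw [swapEntries_eq_swap, swapEntries_eq_swap] at h
  exact hinj c c' hc hc' ((Equiv.swap m (m + 1)).injective h)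

lemma swap_lo {T : Filling} {m : ℕ} {c : ℕ × ℕ} (h : T c = m) :
    swapEntries m T c = m + 1 := by simp [swapEntries, h]

lemma swap_hi {T : Filling} {m : ℕ} {c : ℕ × ℕ} (h : T c = m + 1) :
    swapEntries m T c = m := by simp [swapEntries, h]

lemma swap_other {T : Filling} {m : ℕ} {c : ℕ × ℕ} (h1 : T c ≠ m) (h2 : T c ≠ m + 1) :
    swapEntries m T c = T c := by simp [swapEntries, h1, h2]

lemma succAbove_iff {α : List ℕ} {T : Filling} {m : ℕ} {c c' : ℕ × ℕ}
    (hinj : Inj α T) (hc : IsCell α c) (hc' : IsCell α c')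
    (hm : T c = m) (hm' : T c' = m + 1) : SuccAbove α T m ↔ c.1 < c'.1 := by
  constructor
  · rintro ⟨d, d', hd, hd', hdm, hdm', hlt⟩
    have e1 : d = c := hinj d c hd hc (hdm.trans hm.symm)
    have e2 : d' = c' := hinj d' c' hd' hc' (hdm'.trans hm'.symm)
    rw [e1, e2] at hlt; exact hlt
  · exact fun h => ⟨c, c', hc, hc', hm, hm', h⟩

lemma succSameRow_iff {α : List ℕ} {T : Filling} {m : ℕ} {c c' : ℕ × ℕ}
    (hinj : Inj α T) (hc : IsCell α c) (hc' : IsCell α c')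
    (hm : T c = m) (hm' : T c' = m + 1) : SuccSameRow α T m ↔ c.1 = c'.1 := by
  constructor
  · rintro ⟨d, d', hd, hd', hdm, hdm', hlt⟩
    have e1 : d = c := hinj d c hd hc (hdm.trans hm.symm)
    have e2 : d' = c' := hinj d' c' hd' hc' (hdm'.trans hm'.symm)
    rw [e1, e2] at hlt; exact hlt
  · exact fun h => ⟨c, c', hc, hc', hm, hm', h⟩

lemma piRS_bot (α : List ℕ) (i : ℕ) : piRS α i none = none := rfl

lemma piRS_self {α : List ℕ} {T : Filling} {m : ℕ} {c c' : ℕ × ℕ}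
    (hinj : Inj α T) (hc : IsCell α c) (hc' : IsCell α c')
    (hm : T c = m) (hm' : T c' = m + 1) (h : c.1 < c'.1) :
    piRS α m (some T) = some T := by
  simp only [piRS]
  rw [if_pos ((succAbove_iff hinj hc hc' hm hm').2 h)]

lemma piRS_none {α : List ℕ} {T : Filling} {m : ℕ} {c c' : ℕ × ℕ}
    (hinj : Inj α T) (hc : IsCell α c) (hc' : IsCell α c')
    (hm : T c = m) (hm' : T c' = m + 1) (h : c.1 = c'.1) :
    piRS α m (some T) = none := by
  simp only [piRS]
  rw [if_neg, if_pos ((succSameRow_iff hinj hc hc' hm hm').2 h)]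
  rw [succAbove_iff hinj hc hc' hm hm']; omega

lemma piRS_swap {α : List ℕ} {T : Filling} {m : ℕ} {c c' : ℕ × ℕ}
    (hinj : Inj α T) (hc : IsCell α c) (hc' : IsCell α c')
    (hm : T c = m) (hm' : T c' = m + 1) (h : c'.1 < c.1) :
    piRS α m (some T) = some (swapEntries m T) := by
  simp only [piRS]
  rw [if_neg, if_neg]
  · rw [succSameRow_iff hinj hc hc' hm hm']; omega
  · rw [succAbove_iff hinj hc hc' hm hm']; omega

lemma swap_comm {i j : ℕ} (h : i + 2 ≤ j) (T : Filling) :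
    swapEntries i (swapEntries j T) = swapEntries j (swapEntries i T) := by
  funext c
  simp only [swapEntries]
  split_ifs <;> omega

set_option maxHeartbeats 1000000 in
lemma swap_braid (i : ℕ) (T : Filling) :
    swapEntries i (swapEntries (i + 1) (swapEntries i T)) =
      swapEntries (i + 1) (swapEntries i (swapEntries (i + 1) T)) := by
  funext c
  simp only [swapEntries]
  split_ifs <;> omega

lemma comm_aux {α : List ℕ} {i j : ℕ} (hij : i + 2 ≤ j) (h1 : 1 ≤ i) (h2 : j + 1 ≤ α.sum)
    (T : Filling) (hT : IsSIT α T) :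
    piRS α i (piRS α j (some T)) = piRS α j (piRS α i (some T)) := by
  obtain ⟨⟨_, _, hinj, hsurj⟩, _, _⟩ := hT
  obtain ⟨ci, hci, hvi⟩ := hsurj i h1 (by omega)
  obtain ⟨ci', hci', hvi'⟩ := hsurj (i + 1) (by omega) (by omega)
  obtain ⟨cj, hcj, hvj⟩ := hsurj j (by omega) (by omega)
  obtain ⟨cj', hcj', hvj'⟩ := hsurj (j + 1) (by omega) (by omega)
  rcases lt_trichotomy ci.1 ci'.1 with hi | hi | hi <;>
    rcases lt_trichotomy cj.1 cj'.1 with hj | hj | hj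
  · simp only [piRS_self hinj hci hci' hvi hvi' hi, piRS_self hinj hcj hcj' hvj hvj' hj]
  · simp only [piRS_self hinj hci hci' hvi hvi' hi, piRS_none hinj hcj hcj' hvj hvj' hj,
      piRS_bot]
  · have hB := piRS_swap hinj hcj hcj' hvj hvj' hj
    set U := swapEntries j T with hU
    have vUi : U ci = i := by
      rw [hU, swap_other (by rw [hvi]; omega) (by rw [hvi]; omega)]; exact hvi
    have vUi' : U ci' = i + 1 := by
      rw [hU, swap_other (by rw [hvi']; omega) (by rw [hvi']; omega)]; exact hvi'
    have hC := piRS_self (inj_swap hinj j) hci hci' vUi vUi' hi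
    simp only [piRS_self hinj hci hci' hvi hvi' hi, hB, hC, hU]
  · simp only [piRS_none hinj hci hci' hvi hvi' hi, piRS_self hinj hcj hcj' hvj hvj' hj,
      piRS_bot]
  · simp only [piRS_none hinj hci hci' hvi hvi' hi, piRS_none hinj hcj hcj' hvj hvj' hj,
      piRS_bot]
  · have hB := piRS_swap hinj hcj hcj' hvj hvj' hj
    set U := swapEntries j T with hU
    have vUi : U ci = i := by
      rw [hU, swap_other (by rw [hvi]; omega) (by rw [hvi]; omega)]; exact hvi
    have vUi' : U ci' = i + 1 := by
      rw [hU, swap_other (by rw [hvi']; omega) (by rw [hvi']; omega)]; exact hvi'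
    have hC := piRS_none (inj_swap hinj j) hci hci' vUi vUi' hi
    simp only [piRS_none hinj hci hci' hvi hvi' hi, hB, hC, piRS_bot, hU]
  · have hA := piRS_swap hinj hci hci' hvi hvi' hi
    set V := swapEntries i T with hV
    have vVj : V cj = j := by
      rw [hV, swap_other (by rw [hvj]; omega) (by rw [hvj]; omega)]; exact hvj
    have vVj' : V cj' = j + 1 := by
      rw [hV, swap_other (by rw [hvj']; omega) (by rw [hvj']; omega)]; exact hvj'
    have hC := piRS_self (inj_swap hinj i) hcj hcj' vVj vVj' hj
    simp only [hA, piRS_self hinj hcj hcj' hvj hvj' hj, hC, hV]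
  · have hA := piRS_swap hinj hci hci' hvi hvi' hi
    set V := swapEntries i T with hV
    have vVj : V cj = j := by
      rw [hV, swap_other (by rw [hvj]; omega) (by rw [hvj]; omega)]; exact hvj
    have vVj' : V cj' = j + 1 := by
      rw [hV, swap_other (by rw [hvj']; omega) (by rw [hvj']; omega)]; exact hvj'
    have hC := piRS_none (inj_swap hinj i) hcj hcj' vVj vVj' hj
    simp only [hA, piRS_none hinj hcj hcj' hvj hvj' hj, hC, piRS_bot, hV]
  · have hA := piRS_swap hinj hci hci' hvi hvi' hi
    have hB := piRS_swap hinj hcj hcj' hvj hvj' hj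
    set U := swapEntries j T with hU
    set V := swapEntries i T with hV
    have vUi : U ci = i := by
      rw [hU, swap_other (by rw [hvi]; omega) (by rw [hvi]; omega)]; exact hvi
    have vUi' : U ci' = i + 1 := by
      rw [hU, swap_other (by rw [hvi']; omega) (by rw [hvi']; omega)]; exact hvi'
    have vVj : V cj = j := by
      rw [hV, swap_other (by rw [hvj]; omega) (by rw [hvj]; omega)]; exact hvj
    have vVj' : V cj' = j + 1 := by
      rw [hV, swap_other (by rw [hvj']; omega) (by rw [hvj']; omega)]; exact hvj'
    have hC := piRS_swap (inj_swap hinj j) hci hci' vUi vUi' hi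
    have hD := piRS_swap (inj_swap hinj i) hcj hcj' vVj vVj' hj
    simp only [hA, hB, hC, hD, hU, hV]
    exact congrArg some (swap_comm hij T)

theorem piRS_hecke_relations (n : ℕ) (α : List ℕ) (hα : IsComposition α n) :
    (∀ i, 1 ≤ i → i ≤ n - 1 →
      ∀ x : Option Filling, InSITZ α x → piRS α i (piRS α i x) = piRS α i x) ∧
    (∀ i j, 1 ≤ i → i ≤ n - 1 → 1 ≤ j → j ≤ n - 1 → (i + 2 ≤ j ∨ j + 2 ≤ i) →
      ∀ x : Option Filling, InSITZ α x →
        piRS α i (piRS α j x) = piRS α j (piRS α i x)) ∧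
    (∀ i, 1 ≤ i → i + 1 ≤ n - 1 →
      ∀ x : Option Filling, InSITZ α x →
        piRS α i (piRS α (i + 1) (piRS α i x)) =
          piRS α (i + 1) (piRS α i (piRS α (i + 1) x))) := by
  have hsum : α.sum = n := hα.2
  refine ⟨?_, ?_, ?_⟩
  · -- idempotence
    intro i hi1 hi2 x hx
    cases x with
    | none => rfl
    | some T =>
      obtain ⟨⟨_, _, hinj, hsurj⟩, _, _⟩ := hx T rfl
      obtain ⟨c, hc, hv⟩ := hsurj i hi1 (by omega)
      obtain ⟨c', hc', hv'⟩ := hsurj (i + 1) (by omega) (by omega)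
      rcases lt_trichotomy c.1 c'.1 with h | h | h
      · simp only [piRS_self hinj hc hc' hv hv' h]
      · simp only [piRS_none hinj hc hc' hv hv' h, piRS_bot]
      · have hA := piRS_swap hinj hc hc' hv hv' h
        have vU : swapEntries i T c' = i := swap_hi hv'
        have vU' : swapEntries i T c = i + 1 := swap_lo hv
        have hB := piRS_self (inj_swap hinj i) hc' hc vU vU' h
        simp only [hA, hB]
  · -- commutation
    intro i j hi1 hi2 hj1 hj2 hd x hx
    cases x with
    | none => rfl
    | some T =>
      rcases hd with h | h
      · exact comm_aux h hi1 (by omega) T (hx T rfl)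
      · exact (comm_aux h hj1 (by omega) T (hx T rfl)).symm
  · -- braid
    intro i hi1 hi2 x hx
    cases x with
    | none => rfl
    | some T =>
      obtain ⟨⟨_, _, hinj, hsurj⟩, _, _⟩ := hx T rfl
      obtain ⟨c1, hc1, hv1⟩ := hsurj i hi1 (by omega)
      obtain ⟨c2, hc2, hv2⟩ := hsurj (i + 1) (by omega) (by omega)
      obtain ⟨c3, hc3, hv3⟩ := hsurj (i + 2) (by omega) (by omega)
      have hv3' : T c3 = (i + 1) + 1 := hv3
      rcases lt_trichotomy c1.1 c2.1 with h12 | h12 | h12 <;>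
        [skip; skip; skip]
      · -- i+1 above i
        rcases lt_trichotomy c2.1 c3.1 with h23 | h23 | h23
        · simp only [piRS_self hinj hc1 hc2 hv1 hv2 h12,
            piRS_self hinj hc2 hc3 hv2 hv3' h23]
        · simp only [piRS_self hinj hc1 hc2 hv1 hv2 h12,
            piRS_none hinj hc2 hc3 hv2 hv3' h23, piRS_bot]
        · have hB := piRS_swap hinj hc2 hc3 hv2 hv3' h23
          set U := swapEntries (i + 1) T with hU
          have hinjU := inj_swap hinj (i + 1)
          have vU1 : U c1 = i := by
            rw [hU, swap_other (by rw [hv1]; omega) (by rw [hv1]; omega)]; exact hv1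
          have vU3 : U c3 = i + 1 := swap_hi hv3'
          have vU2 : U c2 = (i + 1) + 1 := swap_lo hv2
          rcases lt_trichotomy c1.1 c3.1 with h13 | h13 | h13
          · simp only [piRS_self hinj hc1 hc2 hv1 hv2 h12, hB,
              piRS_self hinjU hc1 hc3 vU1 vU3 h13,
              piRS_self hinjU hc3 hc2 vU3 vU2 h23, hU]
          · simp only [piRS_self hinj hc1 hc2 hv1 hv2 h12, hB,
              piRS_none hinjU hc1 hc3 vU1 vU3 h13, piRS_bot, hU]
          · have hC := piRS_swap hinjU hc1 hc3 vU1 vU3 h13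
            set V := swapEntries i U with hV
            have hinjV := inj_swap hinjU i
            have vV3 : V c3 = i := swap_hi vU3
            have vV1 : V c1 = i + 1 := swap_lo vU1
            have vV2 : V c2 = (i + 1) + 1 := by
              rw [hV, swap_other (by rw [vU2]; omega) (by rw [vU2]; omega)]; exact vU2
            have hD := piRS_self hinjV hc1 hc2 vV1 vV2 h12
            simp only [piRS_self hinj hc1 hc2 hv1 hv2 h12, hB, hC, hD, hU, hV]
      · -- i+1 in same row as i
        have hA := piRS_none hinj hc1 hc2 hv1 hv2 h12
        rcases lt_trichotomy c2.1 c3.1 with h23 | h23 | h23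
        · simp only [hA, piRS_self hinj hc2 hc3 hv2 hv3' h23, piRS_bot]
        · simp only [hA, piRS_none hinj hc2 hc3 hv2 hv3' h23, piRS_bot]
        · have hB := piRS_swap hinj hc2 hc3 hv2 hv3' h23
          set U := swapEntries (i + 1) T with hU
          have hinjU := inj_swap hinj (i + 1)
          have vU1 : U c1 = i := by
            rw [hU, swap_other (by rw [hv1]; omega) (by rw [hv1]; omega)]; exact hv1
          have vU3 : U c3 = i + 1 := swap_hi hv3'
          have vU2 : U c2 = (i + 1) + 1 := swap_lo hv2
          have hC := piRS_swap hinjU hc1 hc3 vU1 vU3 (by omega)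
          set V := swapEntries i U with hV
          have hinjV := inj_swap hinjU i
          have vV3 : V c3 = i := swap_hi vU3
          have vV1 : V c1 = i + 1 := swap_lo vU1
          have vV2 : V c2 = (i + 1) + 1 := by
            rw [hV, swap_other (by rw [vU2]; omega) (by rw [vU2]; omega)]; exact vU2
          have hD := piRS_none hinjV hc1 hc2 vV1 vV2 h12
          simp only [hA, hB, hC, hD, piRS_bot, hU, hV]
      · -- i+1 below i
        have hA := piRS_swap hinj hc1 hc2 hv1 hv2 h12
        set U := swapEntries i T with hU
        have hinjU := inj_swap hinj i
        have vU2 : U c2 = i := swap_hi hv2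
        have vU1 : U c1 = i + 1 := swap_lo hv1
        have vU3 : U c3 = (i + 1) + 1 := by
          rw [hU, swap_other (by rw [hv3]; omega) (by rw [hv3]; omega)]; exact hv3'
        rcases lt_trichotomy c2.1 c3.1 with h23 | h23 | h23
        · -- i+2 above i+1 (in T)
          have hB := piRS_self hinj hc2 hc3 hv2 hv3' h23
          rcases lt_trichotomy c1.1 c3.1 with h13 | h13 | h13
          · simp only [hA, hB, piRS_self hinjU hc1 hc3 vU1 vU3 h13,
              piRS_self hinjU hc2 hc1 vU2 vU1 h12, hU]
          · simp only [hA, hB, piRS_none hinjU hc1 hc3 vU1 vU3 h13, piRS_bot, hU]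
          · have hC := piRS_swap hinjU hc1 hc3 vU1 vU3 h13
            set V := swapEntries (i + 1) U with hV
            have hinjV := inj_swap hinjU (i + 1)
            have vV2 : V c2 = i := by
              rw [hV, swap_other (by rw [vU2]; omega) (by rw [vU2]; omega)]; exact vU2
            have vV3 : V c3 = i + 1 := swap_hi vU3
            have vV1 : V c1 = (i + 1) + 1 := swap_lo vU1
            have hD := piRS_self hinjV hc2 hc3 vV2 vV3 h23
            simp only [hA, hB, hC, hD, hU, hV]
        · -- same row for i+1, i+2
          have hB := piRS_none hinj hc2 hc3 hv2 hv3' h23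
          have hC := piRS_swap hinjU hc1 hc3 vU1 vU3 (by omega)
          set V := swapEntries (i + 1) U with hV
          have hinjV := inj_swap hinjU (i + 1)
          have vV2 : V c2 = i := by
            rw [hV, swap_other (by rw [vU2]; omega) (by rw [vU2]; omega)]; exact vU2
          have vV3 : V c3 = i + 1 := swap_hi vU3
          have hD := piRS_none hinjV hc2 hc3 vV2 vV3 h23
          simp only [hA, hB, hC, hD, piRS_bot, hU, hV]
        · -- i+2 below i+1
          have hB := piRS_swap hinj hc2 hc3 hv2 hv3' h23
          have hC := piRS_swap hinjU hc1 hc3 vU1 vU3 (by omega)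
          set V := swapEntries (i + 1) U with hV
          have hinjV := inj_swap hinjU (i + 1)
          have vV2 : V c2 = i := by
            rw [hV, swap_other (by rw [vU2]; omega) (by rw [vU2]; omega)]; exact vU2
          have vV3 : V c3 = i + 1 := swap_hi vU3
          have hD := piRS_swap hinjV hc2 hc3 vV2 vV3 h23
          set W := swapEntries (i + 1) T with hW
          have hinjW := inj_swap hinj (i + 1)
          have vW1 : W c1 = i := by
            rw [hW, swap_other (by rw [hv1]; omega) (by rw [hv1]; omega)]; exact hv1
          have vW3 : W c3 = i + 1 := swap_hi hv3'
          have vW2 : W c2 = (i + 1) + 1 := swap_lo hv2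
          have hE := piRS_swap hinjW hc1 hc3 vW1 vW3 (by omega)
          set X := swapEntries i W with hX
          have hinjX := inj_swap hinjW i
          have vX3 : X c3 = i := swap_hi vW3
          have vX1 : X c1 = i + 1 := swap_lo vW1
          have vX2 : X c2 = (i + 1) + 1 := by
            rw [hX, swap_other (by rw [vW2]; omega) (by rw [vW2]; omega)]; exact vW2
          have hF := piRS_swap hinjX hc1 hc2 vX1 vX2 h12
          simp only [hA, hB, hC, hD, hE, hF, hV, hU, hX, hW]
          exact congrArg some (swap_braid i T)

end ImmHecke
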